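/- Let φ ∈ ℝ with φ/(2π) irrational, let R_φ = [[cos φ, −sin φ], [sin φ, cos φ]], and let γ = [[1,0],[0,0]]. Let T be the smallest closed subsemigroup of GL_2(ℝ) containing {exp(t·γ) : t > 0} ∪ {R_φ}. Then T acts strongly irreducibly on ℝ² and T is proximal. -/

import Mathlib

open scoped Matrix

/-- A matrix is proximal if its characteristic polynomial (over ℂ) has a root of algebraic
multiplicity one whose absolute value strictly exceeds that of every other root. -/
def Matrix.IsProximal {d : ℕ} (g : Matrix (Fin d) (Fin d) ℝ) : Prop :=
  ∃ lam : ℂ,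
    ((g.map (Complex.ofReal : ℝ → ℂ)).charpoly).rootMultiplicity lam = 1 ∧
    ∀ mu : ℂ, ((g.map (Complex.ofReal : ℝ → ℂ)).charpoly).IsRoot mu → mu ≠ lam →
      ‖mu‖ < ‖lam‖

/-- A set of invertible matrices acts strongly irreducibly on `ℝ^d` (acting on row vectors from
the right) if there is no finite union of nonzero proper linear subspaces mapped into itself by
every element of the set. -/
def StronglyIrreducibleSet {d : ℕ} (T : Set (Matrix (Fin d) (Fin d) ℝ)ˣ) : Prop :=
  ¬ ∃ (m : ℕ) (W : Fin (m + 1) → Submodule ℝ (Fin d → ℝ)),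
      (∀ i, W i ≠ ⊥ ∧ W i ≠ ⊤) ∧
      ∀ g ∈ T, ∀ y ∈ ⋃ i, (W i : Set (Fin d → ℝ)),
        Matrix.vecMul y (g : Matrix (Fin d) (Fin d) ℝ) ∈ ⋃ i, (W i : Set (Fin d → ℝ))

/-- A set of invertible matrices is proximal if it contains a proximal element. -/
def ProximalSet {d : ℕ} (T : Set (Matrix (Fin d) (Fin d) ℝ)ˣ) : Prop :=
  ∃ g ∈ T, Matrix.IsProximal (g : Matrix (Fin d) (Fin d) ℝ)

/-- The generating set of STATEMENT 10: `{exp (t·γ) : t > 0} ∪ {R_φ}` with `γ = [[1,0],[0,0]]`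
and `R_φ` the rotation by angle `φ`, viewed inside `GL_2(ℝ)`. -/
def gen10 (φ : ℝ) : Set (Matrix (Fin 2) (Fin 2) ℝ)ˣ :=
  {g | ∃ t : ℝ, 0 < t ∧
        (g : Matrix (Fin 2) (Fin 2) ℝ) =
          NormedSpace.exp (t • (!![(1 : ℝ), 0; 0, 0] : Matrix (Fin 2) (Fin 2) ℝ))} ∪
  {g | (g : Matrix (Fin 2) (Fin 2) ℝ) =
        !![Real.cos φ, -Real.sin φ; Real.sin φ, Real.cos φ]}

section Aux

open Polynomial

lemma exp_tgamma (t : ℝ) :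
    NormedSpace.exp (t • (!![(1 : ℝ), 0; 0, 0] : Matrix (Fin 2) (Fin 2) ℝ)) =
      !![Real.exp t, 0; 0, 1] := by
  have h1 : t • (!![(1:ℝ),0;0,0] : Matrix (Fin 2) (Fin 2) ℝ) = Matrix.diagonal ![t, 0] := by
    ext i j; fin_cases i <;> fin_cases j <;> simp [Matrix.diagonal]
  rw [h1, Matrix.exp_diagonal]
  have h2 : NormedSpace.exp (![t, 0] : Fin 2 → ℝ) = ![Real.exp t, 1] := by
    rw [Pi.exp_def]
    funext i
    fin_cases i <;> simp [← Real.exp_eq_exp_ℝ]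
  rw [h2]
  ext i j; fin_cases i <;> fin_cases j <;> simp [Matrix.diagonal]

lemma rot_pow (φ : ℝ) (n : ℕ) :
    (!![Real.cos φ, -Real.sin φ; Real.sin φ, Real.cos φ] : Matrix (Fin 2) (Fin 2) ℝ) ^ n =
      !![Real.cos (n*φ), -Real.sin (n*φ); Real.sin (n*φ), Real.cos (n*φ)] := by
  induction n with
  | zero => simp [Matrix.one_fin_two]
  | succ k ih =>
    rw [pow_succ, ih, Matrix.mul_fin_two]
    have h : ((k:ℝ)+1)*φ = k*φ + φ := by ring
    push_cast
    rw [h, Real.cos_add, Real.sin_add]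
    congr 1 <;> ring

lemma diag_proximal : Matrix.IsProximal (!![Real.exp 1, 0; 0, (1:ℝ)]) := by
  have hmap : Matrix.map !![Real.exp 1, 0; 0, (1:ℝ)] (Complex.ofReal : ℝ → ℂ)
      = !![(Real.exp 1 : ℂ), 0; 0, 1] := by
    ext i j; fin_cases i <;> fin_cases j <;> simp
  have hcp : (Matrix.map !![Real.exp 1, 0; 0, (1:ℝ)] (Complex.ofReal : ℝ → ℂ)).charpoly
      = (X - C (Real.exp 1 : ℂ)) * (X - C 1) := by
    rw [hmap, Matrix.charpoly_of_upperTriangular]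
    · rw [Fin.prod_univ_two]; simp
    · intro i j h; fin_cases i <;> fin_cases j <;> simp_all
  have hne : ((Real.exp 1 : ℝ) : ℂ) ≠ 1 := by
    intro h
    have : Real.exp 1 = 1 := by exact_mod_cast h
    have := Real.exp_one_gt_d9
    linarith
  refine ⟨(Real.exp 1 : ℂ), ?_, ?_⟩
  · rw [hcp, Polynomial.rootMultiplicity_mul (by
      intro h
      have := mul_eq_zero.mp h
      rcases this with h' | h' <;> exact (Polynomial.X_sub_C_ne_zero _) h')]
    rw [Polynomial.rootMultiplicity_X_sub_C, Polynomial.rootMultiplicity_X_sub_C,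
      if_pos rfl, if_neg hne]
  · intro mu hmu hne'
    rw [hcp] at hmu
    have : (mu - (Real.exp 1 : ℂ)) * (mu - 1) = 0 := by
      simpa [Polynomial.IsRoot, Polynomial.eval_mul] using hmu
    rcases mul_eq_zero.mp this with h | h
    · exact absurd (sub_eq_zero.mp h) hne'
    · have hmu1 : mu = 1 := sub_eq_zero.mp h
      rw [hmu1]
      simp only [norm_one, Complex.norm_real, Real.norm_eq_abs]
      rw [abs_of_pos (Real.exp_pos 1)]
      have := Real.exp_one_gt_d9
      linarith

end Aux

/-- For `φ` an irrational multiple of `2π`, the smallest closed subsemigroup `T`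
of `GL_2(ℝ)` containing `{exp (t·γ) : t > 0} ∪ {R_φ}` acts strongly irreducibly on `ℝ²` and is
proximal. -/
theorem stronglyIrreducible_and_proximal_gen10
    (φ : ℝ) (hφ : Irrational (φ / (2 * Real.pi)))
    (T : Set (Matrix (Fin 2) (Fin 2) ℝ)ˣ)
    (hsub : gen10 φ ⊆ T) (hclosed : IsClosed T)
    (hmul : ∀ a ∈ T, ∀ b ∈ T, a * b ∈ T)
    (hmin : ∀ T' : Set (Matrix (Fin 2) (Fin 2) ℝ)ˣ, IsClosed T' →
      (∀ a ∈ T', ∀ b ∈ T', a * b ∈ T') → gen10 φ ⊆ T' → T ⊆ T') :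
    StronglyIrreducibleSet T ∧ ProximalSet T := by
  have hπ : Real.pi ≠ 0 := Real.pi_ne_zero
  -- the rotation matrix as a unit
  set R : Matrix (Fin 2) (Fin 2) ℝ := !![Real.cos φ, -Real.sin φ; Real.sin φ, Real.cos φ] with hR
  have hRinv : R * !![Real.cos φ, Real.sin φ; -Real.sin φ, Real.cos φ] = 1 := by
    rw [hR, Matrix.mul_fin_two]
    have := Real.sin_sq_add_cos_sq φ
    ext i j; fin_cases i <;> fin_cases j <;> simp <;> nlinarith
  have hRinv' : !![Real.cos φ, Real.sin φ; -Real.sin φ, Real.cos φ] * R = 1 := by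
    rw [hR, Matrix.mul_fin_two]
    have := Real.sin_sq_add_cos_sq φ
    ext i j; fin_cases i <;> fin_cases j <;> simp <;> nlinarith
  set Runit : (Matrix (Fin 2) (Fin 2) ℝ)ˣ :=
    ⟨R, !![Real.cos φ, Real.sin φ; -Real.sin φ, Real.cos φ], hRinv, hRinv'⟩ with hRunit
  have hRT : Runit ∈ T := hsub (Or.inr rfl)
  constructor
  · -- strong irreducibility
    rintro ⟨m, W, hW, hinv⟩
    obtain ⟨v, hv, hv0⟩ := Submodule.exists_mem_ne_zero_of_ne_bot (hW 0).1
    -- all iterates stay in the union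
    have key : ∀ k : ℕ, Matrix.vecMul v (R ^ k) ∈ ⋃ i, (W i : Set (Fin 2 → ℝ)) := by
      intro k
      induction k with
      | zero =>
        simp only [pow_zero, Matrix.vecMul_one]
        exact Set.mem_iUnion.mpr ⟨0, hv⟩
      | succ k ih =>
        have : Matrix.vecMul v (R ^ (k+1)) = Matrix.vecMul (Matrix.vecMul v (R ^ k)) R := by
          rw [Matrix.vecMul_vecMul, ← pow_succ]
        rw [this]
        exact hinv Runit hRT _ ih
    have keych : ∀ k : ℕ, ∃ i, Matrix.vecMul v (R ^ k) ∈ W i := by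
      intro k; exact Set.mem_iUnion.mp (key k)
    choose f hf using keych
    obtain ⟨k, l, hkl, hfkl⟩ := Finite.exists_ne_map_eq_of_infinite f
    -- wlog k < l
    wlog hlt : k < l generalizing k l
    · exact this l k hkl.symm hfkl.symm (by omega)
    -- u = v R^k is nonzero
    set u : Fin 2 → ℝ := Matrix.vecMul v (R ^ k) with hu
    have hu0 : u ≠ 0 := by
      intro h
      apply hv0
      have hinvR : (R ^ k) * ((Runit⁻¹ : _ˣ) : Matrix (Fin 2) (Fin 2) ℝ) ^ k = 1 := by
        have : (Runit ^ k) * (Runit⁻¹ ^ k) = 1 := by group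
        calc (R ^ k) * ((Runit⁻¹ : _ˣ) : Matrix (Fin 2) (Fin 2) ℝ) ^ k
            = ((Runit ^ k : _ˣ) : Matrix (Fin 2) (Fin 2) ℝ)
              * ((Runit⁻¹ ^ k : _ˣ) : Matrix (Fin 2) (Fin 2) ℝ) := by
              rw [Units.val_pow_eq_pow_val, Units.val_pow_eq_pow_val]
          _ = ((Runit ^ k * Runit⁻¹ ^ k : _ˣ) : Matrix (Fin 2) (Fin 2) ℝ) := rfl
          _ = 1 := by rw [this, Units.val_one]
      have : v = Matrix.vecMul u (((Runit⁻¹ : _ˣ) : Matrix (Fin 2) (Fin 2) ℝ) ^ k) := by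
        rw [hu, Matrix.vecMul_vecMul, hinvR, Matrix.vecMul_one]
      rw [this, h, Matrix.zero_vecMul]
    -- v R^l lies in span of u
    have hfin : FiniteDimensional ℝ (Fin 2 → ℝ) := by infer_instance
    have hdim : Module.finrank ℝ (W (f k)) ≤ 1 := by
      have h2 : Module.finrank ℝ (Fin 2 → ℝ) = 2 := by simp
      have := Submodule.finrank_lt (s := W (f k)) (hW (f k)).2
      omega
    have hspan : Submodule.span ℝ {u} = W (f k) := by
      apply Submodule.eq_of_le_of_finrank_le
      · rw [Submodule.span_le, Set.singleton_subset_iff]; exact hf k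
      · rw [finrank_span_singleton hu0]; exact hdim
    have hmem : Matrix.vecMul v (R ^ l) ∈ Submodule.span ℝ {u} := by
      rw [hspan, hfkl]; exact hf l
    obtain ⟨c, hc⟩ := Submodule.mem_span_singleton.mp hmem
    -- rewrite v R^l as u R^(l-k)
    set n : ℕ := l - k with hn
    have hn1 : 1 ≤ n := by omega
    have hkn : k + n = l := by omega
    have hpow : Matrix.vecMul v (R ^ l) = Matrix.vecMul u (R ^ n) := by
      rw [hu, Matrix.vecMul_vecMul, ← pow_add, hkn]
    have heig : Matrix.vecMul u (R ^ n) = c • u := by rw [← hpow, hc]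
    -- extract sin (n φ) = 0
    rw [rot_pow] at heig
    have h0 := congrFun heig 0
    have h1 := congrFun heig 1
    simp [Matrix.vecMul, dotProduct, Fin.sum_univ_two] at h0 h1
    have hsin : (u 0 ^ 2 + u 1 ^ 2) * Real.sin (n * φ) = 0 := by
      linear_combination u 1 * h0 - u 0 * h1
    have hupos : 0 < u 0 ^ 2 + u 1 ^ 2 := by
      rcases (show u 0 ≠ 0 ∨ u 1 ≠ 0 by
        by_contra h
        push_neg at h
        apply hu0
        funext i; fin_cases i <;> simp [h.1, h.2]) with h | h <;> positivity
    have hsin0 : Real.sin (n * φ) = 0 := by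
      rcases mul_eq_zero.mp hsin with h | h
      · linarith
      · exact h
    obtain ⟨z, hz⟩ := Real.sin_eq_zero_iff.mp hsin0
    -- contradiction with irrationality
    apply Rat.not_irrational ((z : ℚ) / (2 * n))
    have hn0 : (0:ℝ) < (n:ℝ) := by exact_mod_cast Nat.pos_of_ne_zero (by omega)
    have : φ / (2 * Real.pi) = ((z : ℚ) / (2 * n) : ℚ) := by
      push_cast
      rw [div_eq_div_iff (by positivity) (by linarith)]
      linear_combination -2 * hz
    rwa [this] at hφ
  · -- proximality
    have hexp1 : NormedSpace.exp ((1:ℝ) • (!![(1 : ℝ), 0; 0, 0] : Matrix (Fin 2) (Fin 2) ℝ))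
        = !![Real.exp 1, 0; 0, 1] := exp_tgamma 1
    have he0 : Real.exp 1 ≠ 0 := (Real.exp_pos 1).ne'
    set E : (Matrix (Fin 2) (Fin 2) ℝ)ˣ :=
      ⟨!![Real.exp 1, 0; 0, 1], !![(Real.exp 1)⁻¹, 0; 0, 1],
        by rw [Matrix.mul_fin_two]; ext i j; fin_cases i <;> fin_cases j <;>
          simp [mul_inv_cancel₀ he0],
        by rw [Matrix.mul_fin_two]; ext i j; fin_cases i <;> fin_cases j <;>
          simp [inv_mul_cancel₀ he0]⟩ with hE
    have hET : E ∈ T := hsub (Or.inl ⟨1, one_pos, by rw [hexp1]⟩)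
    exact ⟨E, hET, diag_proximal⟩
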